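/- Let (L, ∨, ∧) be the Boolean lattice of subsets of [l], and let φ : k[X_I : I ⊆ [l]] → k[z₁,…,z_l, w] be the algebra map X_I ↦ w·∏_{i∈I} z_i. Then the kernel of φ is the ideal generated by the binomials X_I X_J − X_{I∩J} X_{I∪J} for all I, J ⊆ [l]. -/

import Mathlib

open MvPolynomial

namespace CubeProofAux

variable {𝕜 : Type*} [CommRing 𝕜] {l : ℕ}

variable (𝕜 l) in
noncomputable def Sp : Ideal (MvPolynomial (Finset (Fin l)) 𝕜) :=
  Ideal.span {g | ∃ I J : Finset (Fin l), g = X I * X J - X (I ∩ J) * X (I ∪ J)}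

lemma gen_mem (I J : Finset (Fin l)) :
    (X I * X J - X (I ∩ J) * X (I ∪ J) : MvPolynomial (Finset (Fin l)) 𝕜) ∈ Sp 𝕜 l :=
  Ideal.subset_span ⟨I, J, rfl⟩

noncomputable def P (𝕜 : Type*) [CommRing 𝕜] {l : ℕ} (L : List (Finset (Fin l))) :
    MvPolynomial (Finset (Fin l)) 𝕜 :=
  (L.map X).prod

@[simp] lemma P_nil : P 𝕜 ([] : List (Finset (Fin l))) = 1 := rfl

@[simp] lemma P_cons (I : Finset (Fin l)) (L : List (Finset (Fin l))) :
    P 𝕜 (I :: L) = X I * P 𝕜 L := by simp [P]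

def mergeAux (I : Finset (Fin l)) :
    List (Finset (Fin l)) → Finset (Fin l) × List (Finset (Fin l))
  | [] => (I, [])
  | J :: L => ((mergeAux (I ∪ J) L).1, (I ∩ J) :: (mergeAux (I ∪ J) L).2)

lemma mergeAux_mem (I : Finset (Fin l)) (L : List (Finset (Fin l))) :
    X I * P 𝕜 L - X (mergeAux I L).1 * P 𝕜 (mergeAux I L).2 ∈ Sp 𝕜 l := by
  induction L generalizing I with
  | nil => simp [mergeAux]
  | cons J L ih =>
      have h1 := gen_mem (𝕜 := 𝕜) I J
      have h2 := ih (I ∪ J)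
      have key : X I * P 𝕜 (J :: L) -
          X (mergeAux I (J :: L)).1 * P 𝕜 (mergeAux I (J :: L)).2
          = (X I * X J - X (I ∩ J) * X (I ∪ J)) * P 𝕜 L
            + X (I ∩ J) * (X (I ∪ J) * P 𝕜 L
              - X (mergeAux (I ∪ J) L).1 * P 𝕜 (mergeAux (I ∪ J) L).2) := by
        simp only [mergeAux, P_cons]; ring
      rw [key]
      exact (Sp 𝕜 l).add_mem (Ideal.mul_mem_right _ _ h1) (Ideal.mul_mem_left _ _ h2)

lemma mergeAux_len (I : Finset (Fin l)) (L : List (Finset (Fin l))) :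
    (mergeAux I L).2.length = L.length := by
  induction L generalizing I with
  | nil => rfl
  | cons J L ih => simp [mergeAux, ih]

lemma mem_mergeAux_fst {i : Fin l} (I : Finset (Fin l)) (L : List (Finset (Fin l))) :
    i ∈ (mergeAux I L).1 ↔ i ∈ I ∨ ∃ J ∈ L, i ∈ J := by
  induction L generalizing I with
  | nil => simp [mergeAux]
  | cons J L ih =>
      simp only [mergeAux, ih (I ∪ J), Finset.mem_union, List.mem_cons]
      constructor
      · rintro (( h | h) | ⟨K, hK, hiK⟩)
        · exact Or.inl h
        · exact Or.inr ⟨J, Or.inl rfl, h⟩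
        · exact Or.inr ⟨K, Or.inr hK, hiK⟩
      · rintro (h | ⟨K, (rfl | hK), hiK⟩)
        · exact Or.inl (Or.inl h)
        · exact Or.inl (Or.inr hiK)
        · exact Or.inr ⟨K, hK, hiK⟩

def cnt (i : Fin l) (L : List (Finset (Fin l))) : ℕ :=
  Multiset.countP (fun J => i ∈ J) (↑L : Multiset (Finset (Fin l)))

lemma cnt_nil (i : Fin l) : cnt i ([] : List (Finset (Fin l))) = 0 := rfl

lemma cnt_cons (i : Fin l) (I : Finset (Fin l)) (L : List (Finset (Fin l))) :
    cnt i (I :: L) = cnt i L + (if i ∈ I then 1 else 0) := by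
  show Multiset.countP _ (I ::ₘ ↑L) = _
  rw [Multiset.countP_cons]
  rfl

lemma cnt_merge_aux (i : Fin l) (I : Finset (Fin l)) (L : List (Finset (Fin l))) :
    cnt i (mergeAux I L).2 + (if i ∈ (mergeAux I L).1 then 1 else 0)
      = cnt i L + (if i ∈ I then 1 else 0) := by
  induction L generalizing I with
  | nil => simp [mergeAux, cnt_nil]; rfl
  | cons J L ih =>
      have h := ih (I ∪ J)
      simp only [mergeAux, cnt_cons] at *
      by_cases hI : i ∈ I <;> by_cases hJ : i ∈ J <;>
        simp only [Finset.mem_union, Finset.mem_inter, hI, hJ, and_true, and_false,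
          true_or, or_true, false_or, or_false, if_true, if_false] at h ⊢ <;> by_cases hm : i ∈ (mergeAux (I ∪ J) L).1 <;> simp only [hm, if_true, if_false] at h ⊢ <;> omega

lemma cnt_merge_zero (i : Fin l) (I : Finset (Fin l)) (L : List (Finset (Fin l)))
    (h : i ∉ (mergeAux I L).1) : cnt i (mergeAux I L).2 = 0 := by
  induction L generalizing I with
  | nil => simp [mergeAux, cnt_nil]
  | cons J L ih =>
      simp only [mergeAux] at h ⊢
      have hIJ : i ∉ I ∪ J := fun hc => h ((mem_mergeAux_fst (I ∪ J) L).mpr (Or.inl hc))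
      have hint : i ∉ I ∩ J := fun hc =>
        hIJ (Finset.mem_union_left _ (Finset.mem_inter.mp hc).1)
      rw [cnt_cons, ih _ h]
      simp [hint]

lemma cnt_mergeAux (i : Fin l) (I : Finset (Fin l)) (L : List (Finset (Fin l))) :
    cnt i (mergeAux I L).2 = cnt i (I :: L) - 1 := by
  have h := cnt_merge_aux i I L
  rw [cnt_cons] at *
  by_cases hm : i ∈ (mergeAux I L).1
  · simp only [hm, if_true] at h; omega
  · have h0 := cnt_merge_zero i I L hm
    simp only [hm, if_false] at h
    omega

lemma cnt_pos (i : Fin l) (L : List (Finset (Fin l))) :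
    0 < cnt i L ↔ ∃ J ∈ L, i ∈ J := by
  rw [cnt, Multiset.countP_pos]
  simp

lemma pos_cnt_iff (i : Fin l) (I : Finset (Fin l)) (L : List (Finset (Fin l))) :
    i ∈ (mergeAux I L).1 ↔ 0 < cnt i (I :: L) := by
  rw [mem_mergeAux_fst, cnt_cons]
  constructor
  · rintro (h | h)
    · simp [h]
    · have hp : 0 < cnt i L := (cnt_pos i L).mpr h
      exact lt_of_lt_of_le hp (Nat.le_add_right _ _)
  · intro h
    by_cases hI : i ∈ I
    · exact Or.inl hI
    · simp only [hI, if_false, add_zero] at h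
      exact Or.inr ((cnt_pos i L).mp h)


noncomputable def NF (𝕜 : Type*) [CommRing 𝕜] {l : ℕ} (m : ℕ) (v : Fin l → ℕ) :
    MvPolynomial (Finset (Fin l)) 𝕜 :=
  ∏ k ∈ Finset.range m, X (Finset.univ.filter fun i => k < v i)

lemma NF_succ (n : ℕ) (v : Fin l → ℕ) :
    NF 𝕜 (n + 1) v
      = X (Finset.univ.filter fun i => 0 < v i) * NF 𝕜 n (fun i => v i - 1) := by
  rw [NF, Finset.prod_range_succ', mul_comm]
  congr 1
  apply Finset.prod_congr rfl
  intro k _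
  congr 1
  apply Finset.filter_congr
  intro i _
  beta_reduce
  omega

lemma straighten : ∀ (n : ℕ) (L : List (Finset (Fin l))), L.length = n →
    P 𝕜 L - NF 𝕜 L.length (fun i => cnt i L) ∈ Sp 𝕜 l := by
  intro n
  induction n with
  | zero =>
      intro L hL
      rw [List.length_eq_zero_iff.mp hL]
      simp [NF]
  | succ n ih =>
      intro L hL
      match L with
      | I :: L₀ =>
        have hlen : L₀.length = n := by simpa using hL
        have hlen' : (mergeAux I L₀).2.length = n := by rw [mergeAux_len]; exact hlen
        have hS1 := mergeAux_mem (𝕜 := 𝕜) I L₀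
        have hS2 := ih (mergeAux I L₀).2 hlen'
        have hNF : NF 𝕜 (I :: L₀).length (fun i => cnt i (I :: L₀))
            = X (mergeAux I L₀).1
              * NF 𝕜 (mergeAux I L₀).2.length (fun i => cnt i (mergeAux I L₀).2) := by
          have h1 : (I :: L₀).length = n + 1 := hL
          rw [h1, NF_succ, hlen']
          congr 1
          · congr 1
            ext i
            simp only [Finset.mem_filter, Finset.mem_univ, true_and]
            exact (pos_cnt_iff i I L₀).symm
          · congr 1
            funext i
            rw [cnt_mergeAux]
        have key : P 𝕜 (I :: L₀) - NF 𝕜 (I :: L₀).length (fun i => cnt i (I :: L₀))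
            = (X I * P 𝕜 L₀ - X (mergeAux I L₀).1 * P 𝕜 (mergeAux I L₀).2)
              + X (mergeAux I L₀).1 * (P 𝕜 (mergeAux I L₀).2
                  - NF 𝕜 (mergeAux I L₀).2.length (fun i => cnt i (mergeAux I L₀).2)) := by
          rw [hNF, P_cons]; ring
        rw [key]
        exact (Sp 𝕜 l).add_mem hS1 (Ideal.mul_mem_left _ _ hS2)

lemma prod_monomial {σ τ : Type*} (s : Finset τ) (f : τ → (σ →₀ ℕ)) :
    ∏ t ∈ s, (monomial (f t) (1 : 𝕜)) = monomial (∑ t ∈ s, f t) 1 := by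
  induction s using Finset.cons_induction with
  | empty => simp
  | cons a s ha ih =>
      rw [Finset.prod_cons, ih, Finset.sum_cons, monomial_mul, mul_one]

lemma toMultiset_map_prod {α M : Type*} [CommMonoid M] (a : α →₀ ℕ) (g : α → M) :
    (a.toMultiset.map g).prod = a.prod fun I n => g I ^ n := by
  induction a using Finsupp.induction with
  | zero => simp
  | single_add I n a hI hn ih =>
      rw [Finsupp.toMultiset_add, Multiset.map_add, Multiset.prod_add, ih,
        Finsupp.toMultiset_single, Multiset.nsmul_singleton, Multiset.map_replicate,
        Multiset.prod_replicate,
        Finsupp.prod_add_index' (fun _ => pow_zero _) (fun _ _ _ => pow_add _ _ _)]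
      simp [Finsupp.prod_single_index]

lemma countP_replicate {α : Type*} (p : α → Prop) [DecidablePred p] (n : ℕ) (I : α) :
    Multiset.countP p (Multiset.replicate n I) = if p I then n else 0 := by
  induction n with
  | zero => simp
  | succ n ih =>
      rw [Multiset.replicate_succ, Multiset.countP_cons, ih]
      split <;> omega

lemma countP_toMultiset {α : Type*} (a : α →₀ ℕ) (p : α → Prop) [DecidablePred p] :
    Multiset.countP p a.toMultiset = a.sum fun I n => if p I then n else 0 := by
  induction a using Finsupp.induction with
  | zero => simp
  | single_add I n a hI hn ih =>
      rw [Finsupp.toMultiset_add, Multiset.countP_add, ih,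
        Finsupp.toMultiset_single, Multiset.nsmul_singleton, countP_replicate,
        Finsupp.sum_add_index' (fun _ => by simp) (fun _ _ _ => by split <;> simp)]
      rw [Finsupp.sum_single_index (by simp)]


noncomputable def eI (l : ℕ) (I : Finset (Fin l)) : Option (Fin l) →₀ ℕ :=
  Finsupp.single none 1 + ∑ i ∈ I, Finsupp.single (some i) 1

lemma X_eq (I : Finset (Fin l)) :
    (X none * ∏ i ∈ I, X (some i) : MvPolynomial (Option (Fin l)) 𝕜)
      = monomial (eI l I) 1 := by
  have h1 : (X none : MvPolynomial (Option (Fin l)) 𝕜)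
      = monomial (Finsupp.single none 1) 1 := rfl
  have h2 : (∏ i ∈ I, (X (some i) : MvPolynomial (Option (Fin l)) 𝕜))
      = monomial (∑ i ∈ I, Finsupp.single (some i) 1) 1 := by
    rw [← prod_monomial]
    apply Finset.prod_congr rfl
    intro i _
    rfl
  rw [h1, h2, monomial_mul, mul_one, eI]

noncomputable def Ed (a : Finset (Fin l) →₀ ℕ) : Option (Fin l) →₀ ℕ :=
  a.sum fun I n => n • eI l I

def md (a : Finset (Fin l) →₀ ℕ) : ℕ := a.sum fun _ n => n

def vd (a : Finset (Fin l) →₀ ℕ) (i : Fin l) : ℕ :=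
  a.sum fun I n => if i ∈ I then n else 0

lemma phi_monomial (a : Finset (Fin l) →₀ ℕ) (c : 𝕜) :
    aeval (fun I : Finset (Fin l) =>
        (X none * ∏ i ∈ I, X (some i) : MvPolynomial (Option (Fin l)) 𝕜))
      (monomial a c) = monomial (Ed a) c := by
  rw [aeval_monomial]
  have h : (a.prod fun I n =>
      (X none * ∏ i ∈ I, X (some i) : MvPolynomial (Option (Fin l)) 𝕜) ^ n)
      = monomial (Ed a) 1 := by
    rw [Finsupp.prod, Ed, Finsupp.sum, ← prod_monomial]
    apply Finset.prod_congr rfl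
    intro I _
    rw [X_eq, monomial_pow, one_pow]
  rw [h, algebraMap_eq, C_mul_monomial, mul_one]

lemma Ed_none (a : Finset (Fin l) →₀ ℕ) : Ed a none = md a := by
  rw [Ed, Finsupp.sum_apply, md]
  apply Finsupp.sum_congr
  intro I _
  rw [Finsupp.smul_apply, eI, Finsupp.add_apply, Finsupp.single_apply]
  rw [Finsupp.finset_sum_apply]
  simp

lemma Ed_some (a : Finset (Fin l) →₀ ℕ) (i : Fin l) : Ed a (some i) = vd a i := by
  rw [Ed, Finsupp.sum_apply, vd]
  apply Finsupp.sum_congr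
  intro I _
  rw [Finsupp.smul_apply, eI, Finsupp.add_apply, Finsupp.single_apply]
  rw [Finsupp.finset_sum_apply]
  simp only [Finsupp.single_apply, Option.some.injEq]
  rw [Finset.sum_ite_eq' I i (fun _ => 1)]
  simp only [reduceCtorEq, if_false, zero_add, smul_eq_mul]
  split <;> simp

lemma monomial_eq_P (a : Finset (Fin l) →₀ ℕ) :
    monomial a (1 : 𝕜) = P 𝕜 a.toMultiset.toList := by
  rw [monomial_eq, C_1, one_mul, P]
  have : (a.toMultiset.toList.map X).prod
      = ((a.toMultiset.map (X : Finset (Fin l) → MvPolynomial (Finset (Fin l)) 𝕜)).prod) := by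
    conv_rhs => rw [← Multiset.coe_toList a.toMultiset]
    rfl
  rw [this, toMultiset_map_prod]

lemma len_toList (a : Finset (Fin l) →₀ ℕ) : a.toMultiset.toList.length = md a := by
  rw [Multiset.length_toList, Finsupp.card_toMultiset, md]
  rfl

lemma cnt_toList (a : Finset (Fin l) →₀ ℕ) (i : Fin l) :
    cnt i a.toMultiset.toList = vd a i := by
  rw [cnt, Multiset.coe_toList, countP_toMultiset, vd]

lemma monomial_sub_NF (a : Finset (Fin l) →₀ ℕ) (c : 𝕜) :
    monomial a c - c • NF 𝕜 (md a) (vd a) ∈ Sp 𝕜 l := by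
  have h := straighten (𝕜 := 𝕜) a.toMultiset.toList.length a.toMultiset.toList rfl
  rw [← monomial_eq_P, len_toList] at h
  have hv : (fun i => cnt i a.toMultiset.toList) = vd a := by
    funext i; exact cnt_toList a i
  rw [hv] at h
  have : monomial a c - c • NF 𝕜 (md a) (vd a)
      = c • (monomial a (1 : 𝕜) - NF 𝕜 (md a) (vd a)) := by
    rw [smul_sub, smul_monomial, smul_eq_mul, mul_one]
  rw [this, smul_eq_C_mul]
  exact Ideal.mul_mem_left _ _ h


lemma phi_gen (I J : Finset (Fin l)) :
    aeval (fun I : Finset (Fin l) =>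
        (X none * ∏ i ∈ I, X (some i) : MvPolynomial (Option (Fin l)) 𝕜))
      ((X I * X J - X (I ∩ J) * X (I ∪ J) : MvPolynomial (Finset (Fin l)) 𝕜)) = 0 := by
  simp only [map_sub, map_mul, aeval_X]
  have h : (∏ i ∈ I ∪ J, (X (some i) : MvPolynomial (Option (Fin l)) 𝕜))
        * ∏ i ∈ I ∩ J, (X (some i) : MvPolynomial (Option (Fin l)) 𝕜)
      = (∏ i ∈ I, (X (some i) : MvPolynomial (Option (Fin l)) 𝕜))
        * ∏ i ∈ J, (X (some i) : MvPolynomial (Option (Fin l)) 𝕜) :=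
    Finset.prod_union_inter
  rw [sub_eq_zero]
  calc (X none * ∏ i ∈ I, X (some i)) * (X none * ∏ i ∈ J, X (some i))
      = (X (none : Option (Fin l)) * X none)
          * ((∏ i ∈ I, (X (some i) : MvPolynomial (Option (Fin l)) 𝕜))
            * ∏ i ∈ J, X (some i)) := by ring
    _ = (X (none : Option (Fin l)) * X none)
          * ((∏ i ∈ I ∪ J, (X (some i) : MvPolynomial (Option (Fin l)) 𝕜))
            * ∏ i ∈ I ∩ J, X (some i)) := by rw [← h]
    _ = (X none * ∏ i ∈ I ∩ J, X (some i)) * (X none * ∏ i ∈ I ∪ J, X (some i)) := by ring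

lemma ker_eq :
    RingHom.ker
        ((MvPolynomial.aeval (fun I : Finset (Fin l) =>
            (X none * ∏ i ∈ I, X (some i) : MvPolynomial (Option (Fin l)) 𝕜)) :
          MvPolynomial (Finset (Fin l)) 𝕜 →ₐ[𝕜]
            MvPolynomial (Option (Fin l)) 𝕜) :
          MvPolynomial (Finset (Fin l)) 𝕜 →+* MvPolynomial (Option (Fin l)) 𝕜)
      = Sp 𝕜 l := by
  apply le_antisymm
  · intro p hp
    have hp0 : aeval (fun I : Finset (Fin l) =>
        (X none * ∏ i ∈ I, X (some i) : MvPolynomial (Option (Fin l)) 𝕜)) p = 0 := hp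
    have hsum : p = ∑ a ∈ p.support, monomial a (coeff a p) :=
      (support_sum_monomial_coeff p).symm
    have h1 : p - (∑ a ∈ p.support, coeff a p • NF 𝕜 (md a) (vd a)) ∈ Sp 𝕜 l := by
      have h1' : (∑ a ∈ p.support, monomial a (coeff a p))
          - (∑ a ∈ p.support, coeff a p • NF 𝕜 (md a) (vd a)) ∈ Sp 𝕜 l := by
        rw [← Finset.sum_sub_distrib]
        exact Ideal.sum_mem _ fun a _ => monomial_sub_NF a _
      rwa [support_sum_monomial_coeff] at h1'
    have h2 : aeval (fun I : Finset (Fin l) =>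
        (X none * ∏ i ∈ I, X (some i) : MvPolynomial (Option (Fin l)) 𝕜)) p
        = ∑ a ∈ p.support, monomial (Ed a) (coeff a p) := by
      have h2' : aeval (fun I : Finset (Fin l) =>
          (X none * ∏ i ∈ I, X (some i) : MvPolynomial (Option (Fin l)) 𝕜))
          (∑ a ∈ p.support, monomial a (coeff a p))
          = ∑ a ∈ p.support, monomial (Ed a) (coeff a p) := by
        rw [map_sum]
        exact Finset.sum_congr rfl fun a _ => phi_monomial a _
      rwa [support_sum_monomial_coeff] at h2'
    set F : (Option (Fin l) →₀ ℕ) → MvPolynomial (Finset (Fin l)) 𝕜 :=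
      fun e => NF 𝕜 (e none) (fun i => e (some i)) with hFdef
    have hF : ∀ a : Finset (Fin l) →₀ ℕ, NF 𝕜 (md a) (vd a) = F (Ed a) := by
      intro a
      rw [hFdef]
      simp only [Ed_none]
      congr 1
      funext i
      rw [Ed_some]
    have h3 : (∑ a ∈ p.support, coeff a p • NF 𝕜 (md a) (vd a)) = 0 := by
      calc ∑ a ∈ p.support, coeff a p • NF 𝕜 (md a) (vd a)
          = ∑ a ∈ p.support, coeff a p • F (Ed a) := by
            exact Finset.sum_congr rfl fun a _ => by rw [hF]
        _ = ∑ e ∈ p.support.image Ed, ∑ a ∈ p.support.filter (fun a => Ed a = e),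
              coeff a p • F (Ed a) :=
            (Finset.sum_fiberwise_of_maps_to
              (fun a ha => Finset.mem_image_of_mem _ ha) _).symm
        _ = ∑ e ∈ p.support.image Ed, (∑ a ∈ p.support.filter (fun a => Ed a = e),
              coeff a p) • F e := by
            refine Finset.sum_congr rfl fun e _ => ?_
            rw [Finset.sum_smul]
            refine Finset.sum_congr rfl fun a ha => ?_
            rw [(Finset.mem_filter.mp ha).2]
        _ = 0 := by
            refine Finset.sum_eq_zero fun e _ => ?_
            have hc : (∑ a ∈ p.support.filter (fun a => Ed a = e), coeff a p)
                = coeff e (aeval (fun I : Finset (Fin l) =>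
                    (X none * ∏ i ∈ I, X (some i) :
                      MvPolynomial (Option (Fin l)) 𝕜)) p) := by
              rw [h2, coeff_sum, Finset.sum_filter]
              refine Finset.sum_congr rfl fun a _ => ?_
              rw [coeff_monomial]
            rw [hc, hp0, coeff_zero, zero_smul]
    rw [h3, sub_zero] at h1
    exact h1
  · rw [Sp, Ideal.span_le]
    rintro g ⟨I, J, rfl⟩
    exact RingHom.mem_ker.mpr (phi_gen I J)

end CubeProofAux


/-- For the Boolean lattice of subsets of `[l]`, the kernel of the algebra map
`φ : k[X_I : I ⊆ [l]] → k[z₁,…,z_l, w]`, `X_I ↦ w·∏_{i∈I} z_i` (with `w = X none`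
and `z_i = X (some i)`), is the ideal generated by the binomials
`X_I X_J − X_{I∩J} X_{I∪J}`. -/
theorem cube_toric_ideal (𝕜 : Type*) [Field 𝕜] (l : ℕ) :
    RingHom.ker
        ((MvPolynomial.aeval (fun I : Finset (Fin l) =>
            (X none * ∏ i ∈ I, X (some i) : MvPolynomial (Option (Fin l)) 𝕜)) :
          MvPolynomial (Finset (Fin l)) 𝕜 →ₐ[𝕜]
            MvPolynomial (Option (Fin l)) 𝕜) :
          MvPolynomial (Finset (Fin l)) 𝕜 →+* MvPolynomial (Option (Fin l)) 𝕜) =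
      Ideal.span {g : MvPolynomial (Finset (Fin l)) 𝕜 |
        ∃ I J : Finset (Fin l), g = X I * X J - X (I ∩ J) * X (I ∪ J)} := by
  exact CubeProofAux.ker_eq
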